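/- Let C be a (possibly shortened) proper array code with modulus q, three block-rows (column-weight r = 3) and retained block-column label set S ⊆ [0,q−1]. The Tanner graph of C contains a cycle of length eight passing through four distinct block-columns with labels in S if and only if there exist four distinct labels i, j, k, l ∈ S satisfying i − j − k + l ≡ 0 (mod q) or 2i − j − 2k + l ≡ 0 (mod q); and it contains a cycle of length eight passing through exactly three distinct block-columns with labels in S if and only if there exist three distinct labels i, j, k ∈ S satisfying 2i + j − 3k ≡ 0 (mod q) or 2i − j − k ≡ 0 (mod q). -/

import Mathlib

/-- The Tanner graph of a (possibly shortened) array code with modulus `q`,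
block-row labels `a 0, …, a (r-1)` (elements of `ZMod q`), and retained
block-column label set `S ⊆ ZMod q`.  Row vertices are pairs `(i, x)`
(block-row `i`, row `x` within the block); column vertices are pairs `(j, y)`
with `j ∈ S` (block-column labeled `j`, column `y` within the block).
A row `(i, x)` is adjacent to a column `(j, y)` iff the corresponding entry of
the parity-check matrix, i.e. entry `(x, y)` of `P ^ (a i * j)`, equals `1`,
which happens iff `y = x + a i * j`. -/
def tannerGraph (q r : ℕ) (a : Fin r → ZMod q) (S : Finset (ZMod q)) :
    SimpleGraph ((Fin r × ZMod q) ⊕ ({j // j ∈ S} × ZMod q)) where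
  Adj u v :=
    match u, v with
    | Sum.inl (i, x), Sum.inr (j, y) => y = x + a i * (j : ZMod q)
    | Sum.inr (j, y), Sum.inl (i, x) => y = x + a i * (j : ZMod q)
    | _, _ => False
  symm := by
    constructor
    rintro (⟨i, x⟩ | ⟨j, y⟩) (⟨i', x'⟩ | ⟨j', y'⟩) h <;> simp_all
  loopless := by
    constructor
    rintro (⟨i, x⟩ | ⟨j, y⟩) h <;> simp_all

/-- The set of block-column labels visited by a list of vertices of the Tanner
graph (e.g. the support of a walk): a cycle "passes through" the block-columns
whose labels appear in this set. -/
def colLabels {q r : ℕ} {S : Finset (ZMod q)}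
    (l : List ((Fin r × ZMod q) ⊕ ({j // j ∈ S} × ZMod q))) : Finset (ZMod q) :=
  (l.filterMap (fun v => match v with
    | Sum.inl _ => none
    | Sum.inr (j, _) => some (j : ZMod q))).toFinset

/-- For a (possibly shortened) proper array code with modulus `q`
(an odd prime), three block-rows (labels in arithmetic progression, common
difference `d ≢ 0`, distinct) and retained block-column label set `S`:
the Tanner graph contains a cycle of length eight passing through four distinct
block-columns iff there are four distinct labels `i, j, k, l ∈ S` with
`i - j - k + l ≡ 0` or `2i - j - 2k + l ≡ 0 (mod q)`; and it contains a cycle of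
length eight passing through exactly three distinct block-columns iff there are
three distinct labels `i, j, k ∈ S` with `2i + j - 3k ≡ 0` or
`2i - j - k ≡ 0 (mod q)`. -/

private lemma card_le_two {α : Type*} [DecidableEq α] (x y : α) :
    ({x, y} : Finset α).card ≤ 2 := by
  have h1 := Finset.card_insert_le x ({y} : Finset α)
  have h3 : ({y} : Finset α).card = 1 := Finset.card_singleton y
  omega

private lemma card_le_three {α : Type*} [DecidableEq α] (x y z : α) :
    ({x, y, z} : Finset α).card ≤ 3 := by
  have h1 := Finset.card_insert_le x ({y, z} : Finset α)
  have h2 := Finset.card_insert_le y ({z} : Finset α)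
  have h3 : ({z} : Finset α).card = 1 := Finset.card_singleton z
  omega

private lemma decon {q : ℕ} {a : Fin 3 → ZMod q} {S : Finset (ZMod q)}
    {v} (c : (tannerGraph q 3 a S).Walk v v) (hc : c.IsCycle) (hl : c.length = 8) :
    ∃ i0 i1 i2 i3 : Fin 3, ∃ j0 j1 j2 j3 : {j // j ∈ S},
      i0 ≠ i1 ∧ i1 ≠ i2 ∧ i2 ≠ i3 ∧ i3 ≠ i0 ∧
      (j0:ZMod q) ≠ j1 ∧ (j1:ZMod q) ≠ j2 ∧ (j2:ZMod q) ≠ j3 ∧ (j3:ZMod q) ≠ j0 ∧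
      (a i0 - a i1) * j0 + (a i1 - a i2) * j1 + (a i2 - a i3) * j2 + (a i3 - a i0) * j3 = 0 ∧
      colLabels c.support = {(j0:ZMod q), (j1:ZMod q), (j2:ZMod q), (j3:ZMod q)} := by
  rcases c with _ | @⟨_, w1, _, h1, c⟩
  · simp at hl
  rcases c with _ | @⟨_, w2, _, h2, c⟩
  · simp at hl
  rcases c with _ | @⟨_, w3, _, h3, c⟩
  · simp at hl
  rcases c with _ | @⟨_, w4, _, h4, c⟩
  · simp at hl
  rcases c with _ | @⟨_, w5, _, h5, c⟩
  · simp at hl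
  rcases c with _ | @⟨_, w6, _, h6, c⟩
  · simp at hl
  rcases c with _ | @⟨_, w7, _, h7, c⟩
  · simp at hl
  rcases c with _ | @⟨_, w8, _, h8, c⟩
  · simp at hl
  rcases c with _ | @⟨_, w9, _, h9, c⟩
  case cons => exfalso; simp [SimpleGraph.Walk.length_cons] at hl
  have hnd := hc.support_nodup
  simp only [SimpleGraph.Walk.support_cons, SimpleGraph.Walk.support_nil, List.tail_cons] at hnd
  simp at hnd
  obtain ⟨⟨n12,n13,n14,n15,n16,n17,n1v⟩,⟨n23,n24,n25,n26,n27,n2v⟩,⟨n34,n35,n36,n37,n3v⟩,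
    ⟨n45,n46,n47,n4v⟩,⟨n56,n57,n5v⟩,⟨n67,n6v⟩,n7v⟩ := hnd
  rcases v with ⟨i0,x0⟩ | ⟨j0,y0⟩
  · -- row start
    rcases w1 with ⟨i,x⟩ | ⟨j0,y0⟩; · exact (h1 : False).elim
    rcases w2 with ⟨i1,x1⟩ | ⟨j,y⟩;  swap; · exact (h2 : False).elim
    rcases w3 with ⟨i,x⟩ | ⟨j1,y1⟩; · exact (h3 : False).elim
    rcases w4 with ⟨i2,x2⟩ | ⟨j,y⟩;  swap; · exact (h4 : False).elim
    rcases w5 with ⟨i,x⟩ | ⟨j2,y2⟩; · exact (h5 : False).elim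
    rcases w6 with ⟨i3,x3⟩ | ⟨j,y⟩;  swap; · exact (h6 : False).elim
    rcases w7 with ⟨i,x⟩ | ⟨j3,y3⟩; · exact (h7 : False).elim
    have e1 : y0 = x0 + a i0 * (j0:ZMod q) := h1
    have e2 : y0 = x1 + a i1 * (j0:ZMod q) := h2
    have e3 : y1 = x1 + a i1 * (j1:ZMod q) := h3
    have e4 : y1 = x2 + a i2 * (j1:ZMod q) := h4
    have e5 : y2 = x2 + a i2 * (j2:ZMod q) := h5
    have e6 : y2 = x3 + a i3 * (j2:ZMod q) := h6
    have e7 : y3 = x3 + a i3 * (j3:ZMod q) := h7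
    have e8 : y3 = x0 + a i0 * (j3:ZMod q) := h8
    refine ⟨i0, i1, i2, i3, j0, j1, j2, j3, ?_, ?_, ?_, ?_, ?_, ?_, ?_, ?_, ?_, ?_⟩
    · rintro rfl
      exact n2v (by rw [show x1 = x0 by linear_combination e1 - e2])
    · rintro rfl
      exact n24 (by rw [show x1 = x2 by linear_combination e4 - e3])
    · rintro rfl
      exact n46 (by rw [show x2 = x3 by linear_combination e6 - e5])
    · rintro rfl
      exact n6v (by rw [show x3 = x0 by linear_combination e8 - e7])
    · intro hjj
      exact n13 (by rw [Subtype.ext hjj, show y0 = y1 by linear_combination e2 - e3 + a i1 * hjj])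
    · intro hjj
      exact n35 (by rw [Subtype.ext hjj, show y1 = y2 by linear_combination e4 - e5 + a i2 * hjj])
    · intro hjj
      exact n57 (by rw [Subtype.ext hjj, show y2 = y3 by linear_combination e6 - e7 + a i3 * hjj])
    · intro hjj
      exact n17 (by rw [Subtype.ext hjj.symm, show y0 = y3 by linear_combination e1 - e8 - a i0 * hjj])
    · linear_combination e2 - e1 + e4 - e3 + e6 - e5 + e8 - e7
    · simp [colLabels]
  · -- column start
    rcases w1 with ⟨i0,x0⟩ | ⟨j,y⟩; swap; · exact (h1 : False).elim
    rcases w2 with ⟨i,x⟩ | ⟨j1,y1⟩; · exact (h2 : False).elim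
    rcases w3 with ⟨i1,x1⟩ | ⟨j,y⟩; swap; · exact (h3 : False).elim
    rcases w4 with ⟨i,x⟩ | ⟨j2,y2⟩; · exact (h4 : False).elim
    rcases w5 with ⟨i2,x2⟩ | ⟨j,y⟩; swap; · exact (h5 : False).elim
    rcases w6 with ⟨i,x⟩ | ⟨j3,y3⟩; · exact (h6 : False).elim
    rcases w7 with ⟨i3,x3⟩ | ⟨j,y⟩; swap; · exact (h7 : False).elim
    have e1 : y0 = x0 + a i0 * (j0:ZMod q) := h1
    have e2 : y1 = x0 + a i0 * (j1:ZMod q) := h2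
    have e3 : y1 = x1 + a i1 * (j1:ZMod q) := h3
    have e4 : y2 = x1 + a i1 * (j2:ZMod q) := h4
    have e5 : y2 = x2 + a i2 * (j2:ZMod q) := h5
    have e6 : y3 = x2 + a i2 * (j3:ZMod q) := h6
    have e7 : y3 = x3 + a i3 * (j3:ZMod q) := h7
    have e8 : y0 = x3 + a i3 * (j0:ZMod q) := h8
    refine ⟨i0, i1, i2, i3, j1, j2, j3, j0, ?_, ?_, ?_, ?_, ?_, ?_, ?_, ?_, ?_, ?_⟩
    · rintro rfl
      exact n13 (by rw [show x0 = x1 by linear_combination e3 - e2])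
    · rintro rfl
      exact n35 (by rw [show x1 = x2 by linear_combination e5 - e4])
    · rintro rfl
      exact n57 (by rw [show x2 = x3 by linear_combination e7 - e6])
    · rintro rfl
      exact n17 (by rw [show x0 = x3 by linear_combination e8 - e1])
    · intro hjj
      exact n24 (by rw [Subtype.ext hjj, show y1 = y2 by linear_combination e3 - e4 + a i1 * hjj])
    · intro hjj
      exact n46 (by rw [Subtype.ext hjj, show y2 = y3 by linear_combination e5 - e6 + a i2 * hjj])
    · intro hjj
      exact n6v (by rw [Subtype.ext hjj, show y3 = y0 by linear_combination e7 - e8 + a i3 * hjj])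
    · intro hjj
      exact n2v (by rw [Subtype.ext hjj.symm, show y1 = y0 by linear_combination e2 - e1 - a i0 * hjj])
    · linear_combination e3 - e2 + e5 - e4 + e7 - e6 + e1 - e8
    · ext z
      simp [colLabels]

set_option maxHeartbeats 1600000 in
private
lemma con {q : ℕ} {a : Fin 3 → ZMod q} {S : Finset (ZMod q)}
    (i0 i1 i2 i3 : Fin 3) (j0 j1 j2 j3 : {j // j ∈ S})
    (x0 x1 x2 x3 y0 y1 y2 y3 : ZMod q)
    (e1 : y0 = x0 + a i0 * (j0:ZMod q)) (e2 : y0 = x1 + a i1 * (j0:ZMod q))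
    (e3 : y1 = x1 + a i1 * (j1:ZMod q)) (e4 : y1 = x2 + a i2 * (j1:ZMod q))
    (e5 : y2 = x2 + a i2 * (j2:ZMod q)) (e6 : y2 = x3 + a i3 * (j2:ZMod q))
    (e7 : y3 = x3 + a i3 * (j3:ZMod q)) (e8 : y3 = x0 + a i0 * (j3:ZMod q))
    (hr01 : i0 ≠ i1 ∨ x0 ≠ x1) (hr02 : i0 ≠ i2 ∨ x0 ≠ x2) (hr03 : i0 ≠ i3 ∨ x0 ≠ x3)
    (hr12 : i1 ≠ i2 ∨ x1 ≠ x2) (hr13 : i1 ≠ i3 ∨ x1 ≠ x3) (hr23 : i2 ≠ i3 ∨ x2 ≠ x3)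
    (hc01 : (j0:ZMod q) ≠ j1 ∨ y0 ≠ y1) (hc02 : (j0:ZMod q) ≠ j2 ∨ y0 ≠ y2)
    (hc03 : (j0:ZMod q) ≠ j3 ∨ y0 ≠ y3) (hc12 : (j1:ZMod q) ≠ j2 ∨ y1 ≠ y2)
    (hc13 : (j1:ZMod q) ≠ j3 ∨ y1 ≠ y3) (hc23 : (j2:ZMod q) ≠ j3 ∨ y2 ≠ y3) :
    ∃ (v : _) (c : (tannerGraph q 3 a S).Walk v v), c.IsCycle ∧ c.length = 8 ∧
      colLabels c.support = {(j0:ZMod q), (j1:ZMod q), (j2:ZMod q), (j3:ZMod q)} := by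
  refine ⟨Sum.inl (i0,x0),
    .cons (show (tannerGraph q 3 a S).Adj (Sum.inl (i0,x0)) (Sum.inr (j0,y0)) from e1)
    (.cons (show (tannerGraph q 3 a S).Adj (Sum.inr (j0,y0)) (Sum.inl (i1,x1)) from e2)
    (.cons (show (tannerGraph q 3 a S).Adj (Sum.inl (i1,x1)) (Sum.inr (j1,y1)) from e3)
    (.cons (show (tannerGraph q 3 a S).Adj (Sum.inr (j1,y1)) (Sum.inl (i2,x2)) from e4)
    (.cons (show (tannerGraph q 3 a S).Adj (Sum.inl (i2,x2)) (Sum.inr (j2,y2)) from e5)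
    (.cons (show (tannerGraph q 3 a S).Adj (Sum.inr (j2,y2)) (Sum.inl (i3,x3)) from e6)
    (.cons (show (tannerGraph q 3 a S).Adj (Sum.inl (i3,x3)) (Sum.inr (j3,y3)) from e7)
    (.cons (show (tannerGraph q 3 a S).Adj (Sum.inr (j3,y3)) (Sum.inl (i0,x0)) from e8)
    .nil))))))), ⟨⟨⟨?_⟩, by simp⟩, ?_⟩, rfl, by simp [colLabels]⟩
  · simp only [SimpleGraph.Walk.edges_cons, SimpleGraph.Walk.edges_nil, List.nodup_cons,
      List.mem_cons, List.not_mem_nil, or_false, not_or, List.nodup_nil, and_true]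
    simp only [Sym2.eq_iff, Prod.mk.injEq, Subtype.ext_iff, not_or, not_and, reduceCtorEq,
      Sum.inl.injEq, Sum.inr.injEq, false_and, and_false, or_false, false_or, not_false_eq_true,
      and_true, true_and]
    have hr01' : i1 ≠ i0 ∨ x1 ≠ x0 := hr01.imp Ne.symm Ne.symm
    have hr02' : i2 ≠ i0 ∨ x2 ≠ x0 := hr02.imp Ne.symm Ne.symm
    have hr03' : i3 ≠ i0 ∨ x3 ≠ x0 := hr03.imp Ne.symm Ne.symm
    have hr12' : i2 ≠ i1 ∨ x2 ≠ x1 := hr12.imp Ne.symm Ne.symm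
    have hr13' : i3 ≠ i1 ∨ x3 ≠ x1 := hr13.imp Ne.symm Ne.symm
    have hr23' : i3 ≠ i2 ∨ x3 ≠ x2 := hr23.imp Ne.symm Ne.symm
    have hc01' : (j1:ZMod q) ≠ j0 ∨ y1 ≠ y0 := hc01.imp Ne.symm Ne.symm
    have hc02' : (j2:ZMod q) ≠ j0 ∨ y2 ≠ y0 := hc02.imp Ne.symm Ne.symm
    have hc03' : (j3:ZMod q) ≠ j0 ∨ y3 ≠ y0 := hc03.imp Ne.symm Ne.symm
    have hc12' : (j2:ZMod q) ≠ j1 ∨ y2 ≠ y1 := hc12.imp Ne.symm Ne.symm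
    have hc13' : (j3:ZMod q) ≠ j1 ∨ y3 ≠ y1 := hc13.imp Ne.symm Ne.symm
    have hc23' : (j3:ZMod q) ≠ j2 ∨ y3 ≠ y2 := hc23.imp Ne.symm Ne.symm
    try simp only [and_imp]
    repeat' apply And.intro
    all_goals intros
    all_goals subst_vars
    all_goals try simp_all
    done
  · simp only [SimpleGraph.Walk.support_cons, SimpleGraph.Walk.support_nil, List.tail_cons]
    simp only [List.nodup_cons, List.mem_cons, List.not_mem_nil, or_false, not_or,
      List.nodup_nil, and_true, List.mem_singleton, Sum.inl.injEq, Sum.inr.injEq,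
      Prod.mk.injEq, Subtype.ext_iff, reduceCtorEq, not_false_eq_true, true_and, and_true,
      false_and, and_false, not_and]
    have hr01' : i1 ≠ i0 ∨ x1 ≠ x0 := hr01.imp Ne.symm Ne.symm
    have hr02' : i2 ≠ i0 ∨ x2 ≠ x0 := hr02.imp Ne.symm Ne.symm
    have hr03' : i3 ≠ i0 ∨ x3 ≠ x0 := hr03.imp Ne.symm Ne.symm
    have hr12' : i2 ≠ i1 ∨ x2 ≠ x1 := hr12.imp Ne.symm Ne.symm
    have hr13' : i3 ≠ i1 ∨ x3 ≠ x1 := hr13.imp Ne.symm Ne.symm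
    have hr23' : i3 ≠ i2 ∨ x3 ≠ x2 := hr23.imp Ne.symm Ne.symm
    have hc01' : (j1:ZMod q) ≠ j0 ∨ y1 ≠ y0 := hc01.imp Ne.symm Ne.symm
    have hc02' : (j2:ZMod q) ≠ j0 ∨ y2 ≠ y0 := hc02.imp Ne.symm Ne.symm
    have hc03' : (j3:ZMod q) ≠ j0 ∨ y3 ≠ y0 := hc03.imp Ne.symm Ne.symm
    have hc12' : (j2:ZMod q) ≠ j1 ∨ y2 ≠ y1 := hc12.imp Ne.symm Ne.symm
    have hc13' : (j3:ZMod q) ≠ j1 ∨ y3 ≠ y1 := hc13.imp Ne.symm Ne.symm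
    have hc23' : (j3:ZMod q) ≠ j2 ∨ y3 ≠ y2 := hc23.imp Ne.symm Ne.symm
    try simp only [and_imp]
    repeat' apply And.intro
    all_goals intros
    all_goals subst_vars
    all_goals try simp_all
    done

private lemma arith4 {q : ℕ} (hq : q.Prime) (hodd : Odd q) {a : Fin 3 → ZMod q} {a₀ d : ZMod q}
    (hd : d ≠ 0) (hAP : ∀ i : Fin 3, a i = a₀ + (i : ℕ) * d)
    {S : Finset (ZMod q)} {j0 j1 j2 j3 : ZMod q}
    (hm0 : j0 ∈ S) (hm1 : j1 ∈ S) (hm2 : j2 ∈ S) (hm3 : j3 ∈ S)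
    (h01 : j0 ≠ j1) (h02 : j0 ≠ j2) (h03 : j0 ≠ j3)
    (h12 : j1 ≠ j2) (h13 : j1 ≠ j3) (h23 : j2 ≠ j3)
    (i0 i1 i2 i3 : Fin 3)
    (hi01 : i0 ≠ i1) (hi12 : i1 ≠ i2) (hi23 : i2 ≠ i3) (hi30 : i3 ≠ i0)
    (hE : (a i0 - a i1) * j0 + (a i1 - a i2) * j1 + (a i2 - a i3) * j2 + (a i3 - a i0) * j3 = 0) :
    ∃ i ∈ S, ∃ j ∈ S, ∃ k ∈ S, ∃ l ∈ S,
      i ≠ j ∧ i ≠ k ∧ i ≠ l ∧ j ≠ k ∧ j ≠ l ∧ k ≠ l ∧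
      (i - j - k + l = 0 ∨ 2 * i - j - 2 * k + l = 0) := by
  haveI := Fact.mk hq
  have h2 : (2 : ZMod q) ≠ 0 := by
    intro h
    rw [show (2 : ZMod q) = ((2 : ℕ) : ZMod q) by push_cast; ring,
      ZMod.natCast_eq_zero_iff] at h
    rw [(Nat.prime_dvd_prime_iff_eq hq Nat.prime_two).mp h] at hodd
    simp [Nat.odd_iff] at hodd
  simp only [hAP] at hE
  fin_cases i0 <;> fin_cases i1 <;> fin_cases i2 <;> fin_cases i3 <;>
    first
    | exact absurd rfl hi01
    | exact absurd rfl hi12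
    | exact absurd rfl hi23
    | exact absurd rfl hi30
    | skip
  all_goals push_cast at hE
  · exact ⟨j0, hm0, j1, hm1, j3, hm3, j2, hm2, h01, h03, h02, h13, h12, h23.symm,
      Or.inl (by
        apply mul_left_cancel₀ (hd)
        rw [mul_zero]
        first | linear_combination hE | linear_combination -hE)⟩
  · exact ⟨j3, hm3, j0, hm0, j2, hm2, j1, hm1, h03.symm, h23.symm, h13.symm, h02, h01, h12.symm,
      Or.inr (by
        apply mul_left_cancel₀ (hd)
        rw [mul_zero]
        first | linear_combination hE | linear_combination -hE)⟩
  · exact ⟨j2, hm2, j0, hm0, j1, hm1, j3, hm3, h02.symm, h12.symm, h23, h01, h03, h13,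
      Or.inl (by
        apply mul_left_cancel₀ (hd)
        rw [mul_zero]
        first | linear_combination hE | linear_combination -hE)⟩
  · exact ⟨j1, hm1, j2, hm2, j0, hm0, j3, hm3, h12, h01.symm, h13, h02.symm, h23, h03,
      Or.inr (by
        apply mul_left_cancel₀ (hd)
        rw [mul_zero]
        first | linear_combination hE | linear_combination -hE)⟩
  · exact ⟨j0, hm0, j1, hm1, j3, hm3, j2, hm2, h01, h03, h02, h13, h12, h23.symm,
      Or.inl (by
        apply mul_left_cancel₀ (mul_ne_zero h2 hd)
        rw [mul_zero]
        first | linear_combination hE | linear_combination -hE)⟩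
  · exact ⟨j3, hm3, j2, hm2, j0, hm0, j1, hm1, h23.symm, h03.symm, h13.symm, h02.symm, h12.symm, h01,
      Or.inr (by
        apply mul_left_cancel₀ (hd)
        rw [mul_zero]
        first | linear_combination hE | linear_combination -hE)⟩
  · exact ⟨j0, hm0, j1, hm1, j3, hm3, j2, hm2, h01, h03, h02, h13, h12, h23.symm,
      Or.inl (by
        apply mul_left_cancel₀ (hd)
        rw [mul_zero]
        first | linear_combination hE | linear_combination -hE)⟩
  · exact ⟨j0, hm0, j1, hm1, j2, hm2, j3, hm3, h01, h02, h03, h12, h13, h23,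
      Or.inl (by
        apply mul_left_cancel₀ (hd)
        rw [mul_zero]
        first | linear_combination hE | linear_combination -hE)⟩
  · exact ⟨j2, hm2, j3, hm3, j1, hm1, j0, hm0, h23, h12.symm, h02.symm, h13.symm, h03.symm, h01.symm,
      Or.inr (by
        apply mul_left_cancel₀ (hd)
        rw [mul_zero]
        first | linear_combination hE | linear_combination -hE)⟩
  · exact ⟨j1, hm1, j0, hm0, j2, hm2, j3, hm3, h01.symm, h12, h13, h02, h03, h23,
      Or.inr (by
        apply mul_left_cancel₀ (hd)
        rw [mul_zero]
        first | linear_combination hE | linear_combination -hE)⟩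
  · exact ⟨j1, hm1, j0, hm0, j3, hm3, j2, hm2, h01.symm, h13, h12, h03, h02, h23.symm,
      Or.inl (by
        apply mul_left_cancel₀ (hd)
        rw [mul_zero]
        first | linear_combination hE | linear_combination -hE)⟩
  · exact ⟨j0, hm0, j1, hm1, j3, hm3, j2, hm2, h01, h03, h02, h13, h12, h23.symm,
      Or.inl (by
        apply mul_left_cancel₀ (hd)
        rw [mul_zero]
        first | linear_combination hE | linear_combination -hE)⟩
  · exact ⟨j0, hm0, j1, hm1, j3, hm3, j2, hm2, h01, h03, h02, h13, h12, h23.symm,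
      Or.inr (by
        apply mul_left_cancel₀ (hd)
        rw [mul_zero]
        first | linear_combination hE | linear_combination -hE)⟩
  · exact ⟨j0, hm0, j1, hm1, j3, hm3, j2, hm2, h01, h03, h02, h13, h12, h23.symm,
      Or.inl (by
        apply mul_left_cancel₀ (mul_ne_zero h2 hd)
        rw [mul_zero]
        first | linear_combination hE | linear_combination -hE)⟩
  · exact ⟨j0, hm0, j3, hm3, j1, hm1, j2, hm2, h03, h01, h02, h13.symm, h23.symm, h12,
      Or.inr (by
        apply mul_left_cancel₀ (hd)
        rw [mul_zero]
        first | linear_combination hE | linear_combination -hE)⟩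
  · exact ⟨j0, hm0, j2, hm2, j3, hm3, j1, hm1, h02, h03, h01, h23, h12.symm, h13.symm,
      Or.inl (by
        apply mul_left_cancel₀ (hd)
        rw [mul_zero]
        first | linear_combination hE | linear_combination -hE)⟩
  · exact ⟨j2, hm2, j1, hm1, j3, hm3, j0, hm0, h12.symm, h23, h02.symm, h13, h01.symm, h03.symm,
      Or.inr (by
        apply mul_left_cancel₀ (hd)
        rw [mul_zero]
        first | linear_combination hE | linear_combination -hE)⟩
  · exact ⟨j0, hm0, j1, hm1, j3, hm3, j2, hm2, h01, h03, h02, h13, h12, h23.symm,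
      Or.inl (by
        apply mul_left_cancel₀ (hd)
        rw [mul_zero]
        first | linear_combination hE | linear_combination -hE)⟩

private lemma arith3 {q : ℕ} (hq : q.Prime) (hodd : Odd q) {a : Fin 3 → ZMod q} {a₀ d : ZMod q}
    (hd : d ≠ 0) (hAP : ∀ i : Fin 3, a i = a₀ + (i : ℕ) * d)
    {S : Finset (ZMod q)} {m j1 j3 : ZMod q}
    (hmS : m ∈ S) (h1S : j1 ∈ S) (h3S : j3 ∈ S)
    (hm1 : m ≠ j1) (hm3 : m ≠ j3) (h13 : j1 ≠ j3)
    (i0 i1 i2 i3 : Fin 3)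
    (hi01 : i0 ≠ i1) (hi12 : i1 ≠ i2) (hi23 : i2 ≠ i3) (hi30 : i3 ≠ i0)
    (hE : (a i0 - a i1) * m + (a i1 - a i2) * j1 + (a i2 - a i3) * m + (a i3 - a i0) * j3 = 0) :
    ∃ i ∈ S, ∃ j ∈ S, ∃ k ∈ S, i ≠ j ∧ i ≠ k ∧ j ≠ k ∧
      (2 * i + j - 3 * k = 0 ∨ 2 * i - j - k = 0) := by
  haveI := Fact.mk hq
  have h2 : (2 : ZMod q) ≠ 0 := by
    intro h
    rw [show (2 : ZMod q) = ((2 : ℕ) : ZMod q) by push_cast; ring,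
      ZMod.natCast_eq_zero_iff] at h
    rw [(Nat.prime_dvd_prime_iff_eq hq Nat.prime_two).mp h] at hodd
    simp [Nat.odd_iff] at hodd
  simp only [hAP] at hE
  fin_cases i0 <;> fin_cases i1 <;> fin_cases i2 <;> fin_cases i3 <;>
    first
    | exact absurd rfl hi01
    | exact absurd rfl hi12
    | exact absurd rfl hi23
    | exact absurd rfl hi30
    | skip
  all_goals push_cast at hE
  · exact ⟨m, hmS, j1, h1S, j3, h3S, hm1, hm3, h13,
      Or.inr (by
        apply mul_left_cancel₀ (hd)
        rw [mul_zero]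
        first | linear_combination hE | linear_combination -hE)⟩
  · exact ⟨j3, h3S, j1, h1S, m, hmS, h13.symm, hm3.symm, hm1.symm,
      Or.inl (by
        apply mul_left_cancel₀ hd
        rw [mul_zero]
        first | linear_combination hE | linear_combination -hE)⟩
  · exact absurd (sub_eq_zero.mp (by
        apply mul_left_cancel₀ hd
        rw [mul_zero]
        first | linear_combination hE | linear_combination -hE)) h13
  · exact ⟨j1, h1S, j3, h3S, m, hmS, h13, hm1.symm, hm3.symm,
      Or.inl (by
        apply mul_left_cancel₀ hd
        rw [mul_zero]
        first | linear_combination hE | linear_combination -hE)⟩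
  · exact ⟨m, hmS, j1, h1S, j3, h3S, hm1, hm3, h13,
      Or.inr (by
        apply mul_left_cancel₀ (mul_ne_zero h2 hd)
        rw [mul_zero]
        first | linear_combination hE | linear_combination -hE)⟩
  · exact ⟨j3, h3S, j1, h1S, m, hmS, h13.symm, hm3.symm, hm1.symm,
      Or.inl (by
        apply mul_left_cancel₀ hd
        rw [mul_zero]
        first | linear_combination hE | linear_combination -hE)⟩
  · exact ⟨m, hmS, j1, h1S, j3, h3S, hm1, hm3, h13,
      Or.inr (by
        apply mul_left_cancel₀ (hd)
        rw [mul_zero]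
        first | linear_combination hE | linear_combination -hE)⟩
  · exact absurd (sub_eq_zero.mp (by
        apply mul_left_cancel₀ hd
        rw [mul_zero]
        first | linear_combination hE | linear_combination -hE)) h13
  · exact ⟨j1, h1S, j3, h3S, m, hmS, h13, hm1.symm, hm3.symm,
      Or.inl (by
        apply mul_left_cancel₀ hd
        rw [mul_zero]
        first | linear_combination hE | linear_combination -hE)⟩
  · exact ⟨j1, h1S, j3, h3S, m, hmS, h13, hm1.symm, hm3.symm,
      Or.inl (by
        apply mul_left_cancel₀ hd
        rw [mul_zero]
        first | linear_combination hE | linear_combination -hE)⟩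
  · exact absurd (sub_eq_zero.mp (by
        apply mul_left_cancel₀ hd
        rw [mul_zero]
        first | linear_combination hE | linear_combination -hE)) h13
  · exact ⟨m, hmS, j1, h1S, j3, h3S, hm1, hm3, h13,
      Or.inr (by
        apply mul_left_cancel₀ (hd)
        rw [mul_zero]
        first | linear_combination hE | linear_combination -hE)⟩
  · exact ⟨j3, h3S, j1, h1S, m, hmS, h13.symm, hm3.symm, hm1.symm,
      Or.inl (by
        apply mul_left_cancel₀ hd
        rw [mul_zero]
        first | linear_combination hE | linear_combination -hE)⟩
  · exact ⟨m, hmS, j1, h1S, j3, h3S, hm1, hm3, h13,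
      Or.inr (by
        apply mul_left_cancel₀ (mul_ne_zero h2 hd)
        rw [mul_zero]
        first | linear_combination hE | linear_combination -hE)⟩
  · exact ⟨j1, h1S, j3, h3S, m, hmS, h13, hm1.symm, hm3.symm,
      Or.inl (by
        apply mul_left_cancel₀ hd
        rw [mul_zero]
        first | linear_combination hE | linear_combination -hE)⟩
  · exact absurd (sub_eq_zero.mp (by
        apply mul_left_cancel₀ hd
        rw [mul_zero]
        first | linear_combination hE | linear_combination -hE)) h13
  · exact ⟨j3, h3S, j1, h1S, m, hmS, h13.symm, hm3.symm, hm1.symm,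
      Or.inl (by
        apply mul_left_cancel₀ hd
        rw [mul_zero]
        first | linear_combination hE | linear_combination -hE)⟩
  · exact ⟨m, hmS, j1, h1S, j3, h3S, hm1, hm3, h13,
      Or.inr (by
        apply mul_left_cancel₀ (hd)
        rw [mul_zero]
        first | linear_combination hE | linear_combination -hE)⟩

set_option maxHeartbeats 4000000 in
theorem pac_r3_eight_cycles_iff (q : ℕ) (hq : q.Prime) (hqodd : Odd q)
    (a : Fin 3 → ZMod q) (a₀ d : ZMod q) (hd : d ≠ 0)
    (hAP : ∀ i : Fin 3, a i = a₀ + (i : ℕ) * d) (ha : Function.Injective a)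
    (S : Finset (ZMod q)) :
    ((∃ (v : (Fin 3 × ZMod q) ⊕ ({j // j ∈ S} × ZMod q))
        (c : (tannerGraph q 3 a S).Walk v v),
          c.IsCycle ∧ c.length = 8 ∧ (colLabels c.support).card = 4) ↔
      ∃ i ∈ S, ∃ j ∈ S, ∃ k ∈ S, ∃ l ∈ S,
        i ≠ j ∧ i ≠ k ∧ i ≠ l ∧ j ≠ k ∧ j ≠ l ∧ k ≠ l ∧
        (i - j - k + l = 0 ∨ 2 * i - j - 2 * k + l = 0)) ∧
    ((∃ (v : (Fin 3 × ZMod q) ⊕ ({j // j ∈ S} × ZMod q))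
        (c : (tannerGraph q 3 a S).Walk v v),
          c.IsCycle ∧ c.length = 8 ∧ (colLabels c.support).card = 3) ↔
      ∃ i ∈ S, ∃ j ∈ S, ∃ k ∈ S, i ≠ j ∧ i ≠ k ∧ j ≠ k ∧
        (2 * i + j - 3 * k = 0 ∨ 2 * i - j - k = 0)) := by
  haveI := Fact.mk hq
  have h2 : (2 : ZMod q) ≠ 0 := by
    intro h
    rw [show (2 : ZMod q) = ((2 : ℕ) : ZMod q) by push_cast; ring,
      ZMod.natCast_eq_zero_iff] at h
    rw [(Nat.prime_dvd_prime_iff_eq hq Nat.prime_two).mp h] at hqodd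
    simp [Nat.odd_iff] at hqodd
  have ha0 : a 0 = a₀ := by rw [hAP]; norm_num
  have ha1 : a 1 = a₀ + d := by rw [hAP]; norm_num
  have ha2 : a 2 = a₀ + 2 * d := by rw [hAP]; norm_num
  have cancel : ∀ u w : ZMod q, d * (u - w) = 0 → u = w := fun u w h =>
    sub_eq_zero.mp ((mul_eq_zero.mp h).resolve_left hd)
  have cancel2 : ∀ u w : ZMod q, (2 * d) * (u - w) = 0 → u = w := fun u w h =>
    sub_eq_zero.mp ((mul_eq_zero.mp h).resolve_left (mul_ne_zero h2 hd))
  constructor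
  · constructor
    · rintro ⟨v, c, hcyc, hlen, hcard⟩
      obtain ⟨i0, i1, i2, i3, j0, j1, j2, j3, hi01, hi12, hi23, hi30,
        hj01, hj12, hj23, hj30, hE, hCL⟩ := decon c hcyc hlen
      rw [hCL] at hcard
      have h02 : (j0 : ZMod q) ≠ (j2 : ZMod q) := by
        intro h
        rw [show ({(j0 : ZMod q), (j1 : ZMod q), (j2 : ZMod q), (j3 : ZMod q)} : Finset (ZMod q))
            = {(j0 : ZMod q), (j1 : ZMod q), (j3 : ZMod q)} by ext t; simp [h]; tauto] at hcard
        have := card_le_three (j0 : ZMod q) (j1 : ZMod q) (j3 : ZMod q)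
        omega
      have h13 : (j1 : ZMod q) ≠ (j3 : ZMod q) := by
        intro h
        rw [show ({(j0 : ZMod q), (j1 : ZMod q), (j2 : ZMod q), (j3 : ZMod q)} : Finset (ZMod q))
            = {(j0 : ZMod q), (j1 : ZMod q), (j2 : ZMod q)} by ext t; simp [h]; tauto] at hcard
        have := card_le_three (j0 : ZMod q) (j1 : ZMod q) (j2 : ZMod q)
        omega
      exact arith4 hq hqodd hd hAP j0.2 j1.2 j2.2 j3.2 hj01 h02 (Ne.symm hj30) hj12 h13 hj23
        i0 i1 i2 i3 hi01 hi12 hi23 hi30 hE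
    · rintro ⟨i, hi, j, hj, k, hk, l, hl, hij, hik, hil, hjk, hjl, hkl, hrel | hrel⟩
      · obtain ⟨v, c, h₁, h₂, h₃⟩ := con (a := a) (S := S) 1 0 1 0 ⟨i, hi⟩ ⟨j, hj⟩ ⟨l, hl⟩ ⟨k, hk⟩
          0 (d * i) (d * i - d * j) (d * i - d * j + d * l)
          (0 + a 1 * i) (d * i + a 0 * j) ((d * i - d * j) + a 1 * l)
          ((d * i - d * j + d * l) + a 0 * k)
          rfl (by rw [ha0, ha1]; ring) rfl (by rw [ha0, ha1]; ring)
          rfl (by rw [ha0, ha1]; ring) rfl (by rw [ha0, ha1]; linear_combination d * hrel)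
          (Or.inl (by decide)) (Or.inr fun h => hij (cancel i j (by linear_combination -h)))
          (Or.inl (by decide)) (Or.inl (by decide))
          (Or.inr fun h => hjl (cancel j l (by linear_combination h))) (Or.inl (by decide))
          (Or.inl hij) (Or.inl hil) (Or.inl hik) (Or.inl hjl) (Or.inl hjk) (Or.inl (Ne.symm hkl))
        refine ⟨v, c, h₁, h₂, ?_⟩
        rw [h₃]
        show ({i, j, l, k} : Finset (ZMod q)).card = 4
        rw [Finset.card_insert_of_notMem (by simp [hij, hil, hik]),
          Finset.card_insert_of_notMem (by simp [hjl, hjk]),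
          Finset.card_insert_of_notMem (by simp [Ne.symm hkl]), Finset.card_singleton]
      · obtain ⟨v, c, h₁, h₂, h₃⟩ := con (a := a) (S := S) 2 0 2 1 ⟨i, hi⟩ ⟨k, hk⟩ ⟨l, hl⟩ ⟨j, hj⟩
          0 (2 * d * i) (2 * d * i - 2 * d * k) (2 * d * i - 2 * d * k + d * l)
          (0 + a 2 * i) (2 * d * i + a 0 * k) ((2 * d * i - 2 * d * k) + a 2 * l)
          ((2 * d * i - 2 * d * k + d * l) + a 1 * j)
          rfl (by rw [ha0, ha2]; ring) rfl (by rw [ha0, ha2]; ring)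
          rfl (by rw [ha1, ha2]; ring) rfl (by rw [ha1, ha2]; linear_combination d * hrel)
          (Or.inl (by decide)) (Or.inr fun h => hik (cancel2 i k (by linear_combination -h)))
          (Or.inl (by decide)) (Or.inl (by decide)) (Or.inl (by decide)) (Or.inl (by decide))
          (Or.inl hik) (Or.inl hil) (Or.inl hij) (Or.inl hkl) (Or.inl (Ne.symm hjk))
          (Or.inl (Ne.symm hjl))
        refine ⟨v, c, h₁, h₂, ?_⟩
        rw [h₃]
        show ({i, k, l, j} : Finset (ZMod q)).card = 4
        rw [Finset.card_insert_of_notMem (by simp [hik, hil, hij]),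
          Finset.card_insert_of_notMem (by simp [hkl, Ne.symm hjk]),
          Finset.card_insert_of_notMem (by simp [Ne.symm hjl]), Finset.card_singleton]
  · constructor
    · rintro ⟨v, c, hcyc, hlen, hcard⟩
      obtain ⟨i0, i1, i2, i3, j0, j1, j2, j3, hi01, hi12, hi23, hi30,
        hj01, hj12, hj23, hj30, hE, hCL⟩ := decon c hcyc hlen
      rw [hCL] at hcard
      by_cases h02 : (j0 : ZMod q) = (j2 : ZMod q)
      · have h13 : (j1 : ZMod q) ≠ (j3 : ZMod q) := by
          intro h
          rw [show ({(j0 : ZMod q), (j1 : ZMod q), (j2 : ZMod q), (j3 : ZMod q)} : Finset (ZMod q))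
              = {(j0 : ZMod q), (j1 : ZMod q)} by ext t; simp [h02, h]; try tauto] at hcard
          have := card_le_two (j0 : ZMod q) (j1 : ZMod q)
          omega
        rw [← h02] at hE
        exact arith3 hq hqodd hd hAP j0.2 j1.2 j3.2 hj01 (Ne.symm hj30) h13
          i0 i1 i2 i3 hi01 hi12 hi23 hi30 (by linear_combination hE)
      · by_cases h13 : (j1 : ZMod q) = (j3 : ZMod q)
        · rw [← h13] at hE
          exact arith3 hq hqodd hd hAP j1.2 j2.2 j0.2 hj12 (Ne.symm hj01) (Ne.symm h02)
            i1 i2 i3 i0 hi12 hi23 hi30 hi01 (by linear_combination hE)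
        · exfalso
          rw [Finset.card_insert_of_notMem (by simp [hj01, h02, Ne.symm hj30]),
            Finset.card_insert_of_notMem (by simp [hj12, h13]),
            Finset.card_insert_of_notMem (by simp [hj23]), Finset.card_singleton] at hcard
          omega
    · rintro ⟨i, hi, j, hj, k, hk, hij, hik, hjk, hrel | hrel⟩
      · obtain ⟨v, c, h₁, h₂, h₃⟩ := con (a := a) (S := S) 0 1 0 2 ⟨k, hk⟩ ⟨j, hj⟩ ⟨k, hk⟩ ⟨i, hi⟩
          0 (-(d * k)) (-(d * k) + d * j) (-(3 * (d * k)) + d * j)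
          (0 + a 0 * k) (-(d * k) + a 1 * j) ((-(d * k) + d * j) + a 0 * k)
          ((-(3 * (d * k)) + d * j) + a 2 * i)
          rfl (by rw [ha0, ha1]; ring) rfl (by rw [ha0, ha1]; ring)
          rfl (by rw [ha0, ha2]; ring) rfl (by rw [ha0, ha2]; linear_combination d * hrel)
          (Or.inl (by decide)) (Or.inr fun h => hjk (cancel j k (by linear_combination -h)))
          (Or.inl (by decide)) (Or.inl (by decide)) (Or.inl (by decide)) (Or.inl (by decide))
          (Or.inl (Ne.symm hjk)) (Or.inr fun h => hjk (cancel j k (by linear_combination -h)))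
          (Or.inl (Ne.symm hik)) (Or.inl hjk) (Or.inl (Ne.symm hij)) (Or.inl (Ne.symm hik))
        refine ⟨v, c, h₁, h₂, ?_⟩
        rw [h₃]
        show ({k, j, k, i} : Finset (ZMod q)).card = 3
        rw [show ({k, j, k, i} : Finset (ZMod q)) = {k, j, i} by ext t; simp; tauto,
          Finset.card_insert_of_notMem (by simp [Ne.symm hjk, Ne.symm hik]),
          Finset.card_insert_of_notMem (by simp [Ne.symm hij]), Finset.card_singleton]
      · obtain ⟨v, c, h₁, h₂, h₃⟩ := con (a := a) (S := S) 1 0 1 0 ⟨i, hi⟩ ⟨j, hj⟩ ⟨i, hi⟩ ⟨k, hk⟩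
          0 (d * i) (d * i - d * j) (2 * (d * i) - d * j)
          (0 + a 1 * i) (d * i + a 0 * j) ((d * i - d * j) + a 1 * i)
          ((2 * (d * i) - d * j) + a 0 * k)
          rfl (by rw [ha0, ha1]; ring) rfl (by rw [ha0, ha1]; ring)
          rfl (by rw [ha0, ha1]; ring) rfl (by rw [ha0, ha1]; linear_combination d * hrel)
          (Or.inl (by decide)) (Or.inr fun h => hij (cancel i j (by linear_combination -h)))
          (Or.inl (by decide)) (Or.inl (by decide))
          (Or.inr fun h => hij (cancel i j (by linear_combination -h))) (Or.inl (by decide))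
          (Or.inl hij) (Or.inr fun h => hij (cancel i j (by linear_combination -h)))
          (Or.inl hik) (Or.inl (Ne.symm hij)) (Or.inl hjk) (Or.inl hik)
        refine ⟨v, c, h₁, h₂, ?_⟩
        rw [h₃]
        show ({i, j, i, k} : Finset (ZMod q)).card = 3
        rw [show ({i, j, i, k} : Finset (ZMod q)) = {i, j, k} by ext t; simp; tauto,
          Finset.card_insert_of_notMem (by simp [hij, hik]),
          Finset.card_insert_of_notMem (by simp [hjk]), Finset.card_singleton]
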